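/- A Rees algebra A and its differential closure B have the same singular locus: a point p is in the singular locus of A (i.e., ord_p(A_i) ≥ i for all i) if and only if it is in the singular locus of B, where B is generated by the ideals Δ^j(A_k) in degree k−j for k in a generating set and j < k. -/
import Mathlib


/-- The order of an ideal `I` in a local ring: the largest `n` with `I ⊆ m^n`. -/
noncomputable def idealOrd {R : Type*} [CommRing R] [IsLocalRing R] (I : Ideal R) : ℕ∞ :=
  ⨆ n ∈ {n : ℕ | I ≤ IsLocalRing.maximalIdeal R ^ n}, (n : ℕ∞)

/-- `Δ(I)`: the ideal generated by `I` together with all first-order derivatives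
of sections of `I` (over the base `k`). -/
noncomputable def deltaIdeal (k : Type*) {R : Type*} [CommRing k] [CommRing R] [Algebra k R]
    (I : Ideal R) : Ideal R :=
  I ⊔ Ideal.span {x | ∃ (D : Derivation k R R) (a : R), a ∈ I ∧ D a = x}

/-- Iterated `Δ` operator. -/
noncomputable def deltaIter (k : Type*) {R : Type*} [CommRing k] [CommRing R] [Algebra k R] :
    ℕ → Ideal R → Ideal R
  | 0, I => I
  | j + 1, I => deltaIdeal k (deltaIter k j I)

/-- The Rees algebra generated by a family `G` of ideals, `G d` sitting in degree `d`. -/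
noncomputable def reesGen {R : Type*} [CommRing R] (G : ℕ → Ideal R) : ℕ → Ideal R := fun i =>
  if i = 0 then ⊤ else
    ⨆ (s : Multiset ℕ) (_ : s.sum = i) (_ : 0 ∉ s), (s.map G).prod

/-- `A` is generated in the degrees of the finite set `K`. -/
def HasGeneratingDegrees {R : Type*} [CommRing R] (A : ℕ → Ideal R) (K : Finset ℕ) : Prop :=
  ∀ i : ℕ, 0 < i →
    A i = ⨆ (s : Multiset ℕ) (_ : ∀ j ∈ s, j ∈ K) (_ : s.sum = i), (s.map A).prod


open IsLocalRing

lemma deriv_mem_pow {k R : Type*} [CommRing k] [CommRing R] [Algebra k R] [IsLocalRing R]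
    (D : Derivation k R R) : ∀ n : ℕ, ∀ a ∈ maximalIdeal R ^ (n + 1), D a ∈ maximalIdeal R ^ n := by
  intro n
  induction n with
  | zero => intro a _; simp
  | succ n ih =>
    intro a ha
    rw [pow_succ] at ha
    refine Submodule.mul_induction_on ha ?_ ?_
    · intro x hx y hy
      rw [Derivation.leibniz, smul_eq_mul, smul_eq_mul]
      refine Ideal.add_mem _ (Ideal.mul_mem_right _ _ hx) ?_
      rw [mul_comm, pow_succ]
      exact Ideal.mul_mem_mul (ih x hx) hy
    · intro x y hx hy
      rw [map_add]
      exact Ideal.add_mem _ hx hy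

lemma deltaIdeal_le {k R : Type*} [CommRing k] [CommRing R] [Algebra k R] [IsLocalRing R]
    (I : Ideal R) (n : ℕ) (h : I ≤ maximalIdeal R ^ (n + 1)) :
    deltaIdeal k I ≤ maximalIdeal R ^ n := by
  rw [deltaIdeal]
  refine sup_le (h.trans (Ideal.pow_le_pow_right n.le_succ)) ?_
  rw [Ideal.span_le]
  rintro x ⟨D, a, ha, rfl⟩
  exact deriv_mem_pow D n a (h ha)

lemma deltaIter_le {k R : Type*} [CommRing k] [CommRing R] [Algebra k R] [IsLocalRing R]
    (I : Ideal R) : ∀ j n : ℕ, j ≤ n → I ≤ maximalIdeal R ^ n →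
    deltaIter k j I ≤ maximalIdeal R ^ (n - j) := by
  intro j
  induction j with
  | zero => intro n _ h; simpa [deltaIter] using h
  | succ j ih =>
    intro n hjn h
    have h1 : deltaIter k j I ≤ maximalIdeal R ^ (n - (j+1) + 1) := by
      have := ih n (by omega) h
      rwa [(by omega : n - j = n - (j+1) + 1)] at this
    exact deltaIdeal_le _ _ h1

lemma multiset_prod_le {R : Type*} [CommRing R] (m : Ideal R) (F : ℕ → Ideal R)
    (s : Multiset ℕ) (h : ∀ j ∈ s, F j ≤ m ^ j) :
    (s.map F).prod ≤ m ^ s.sum := by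
  induction s using Multiset.induction with
  | empty => simp
  | cons a s ih =>
    rw [Multiset.map_cons, Multiset.prod_cons, Multiset.sum_cons, pow_add]
    exact Ideal.mul_mono (h a (Multiset.mem_cons_self a s))
      (ih fun j hj => h j (Multiset.mem_cons_of_mem hj))

lemma le_idealOrd_iff {R : Type*} [CommRing R] [IsLocalRing R] (I : Ideal R) (i : ℕ)
    (hi : 0 < i) : (i : ℕ∞) ≤ idealOrd I ↔ I ≤ maximalIdeal R ^ i := by
  constructor
  · intro h
    by_contra hc
    have hle : idealOrd I ≤ ((i - 1 : ℕ) : ℕ∞) := by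
      rw [idealOrd]
      refine iSup₂_le fun n hn => ?_
      have hni : n < i := by
        by_contra hni
        exact hc (le_trans hn (Ideal.pow_le_pow_right (by omega)))
      exact_mod_cast (by omega : n ≤ i - 1)
    have : (i : ℕ∞) ≤ ((i - 1 : ℕ) : ℕ∞) := h.trans hle
    have : i ≤ i - 1 := by exact_mod_cast this
    omega
  · intro h
    exact le_iSup₂ (f := fun (n : ℕ) (_ : n ∈ {n : ℕ | I ≤ maximalIdeal R ^ n}) => (n : ℕ∞)) i h

/-- a Rees algebra `A` and its differential closure `B` — the Rees
algebra generated by the ideals `Δʲ(A k)` placed in degree `k - j`, for `k` in a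
set `K` of generating degrees and `j < k` — have the same singular locus: at any
point (local ring `R = O_{W,p}` of the characteristic-zero variety `W`),
`ord_p(A i) ≥ i` for all `i > 0` iff `ord_p(B i) ≥ i` for all `i > 0`. -/
theorem differential_closure_same_singular_locus
    {k R : Type*} [Field k] [CharZero k] [CommRing R] [IsLocalRing R] [Algebra k R]
    (A : ℕ → Ideal R) (hA0 : A 0 = ⊤) (hAmul : ∀ i j, A i * A j ≤ A (i + j))
    (K : Finset ℕ) (hKpos : ∀ j ∈ K, 0 < j) (hgen : HasGeneratingDegrees A K)
    (B : ℕ → Ideal R)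
    (hB : B = reesGen (fun d =>
      ⨆ (n : ℕ) (_ : n ∈ K) (j : ℕ) (_ : j < n) (_ : n - j = d), deltaIter k j (A n))) :
    (∀ i : ℕ, 0 < i → (i : ℕ∞) ≤ idealOrd (A i)) ↔
    (∀ i : ℕ, 0 < i → (i : ℕ∞) ≤ idealOrd (B i)) := by

  constructor
  · intro hA i hi
    rw [le_idealOrd_iff _ _ hi, hB, reesGen]
    rw [if_neg hi.ne']
    refine iSup_le fun s => iSup_le fun hs => iSup_le fun h0 => ?_
    rw [← hs]
    refine multiset_prod_le _ _ _ fun d hd => ?_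
    refine iSup_le fun n => iSup_le fun hn => iSup_le fun j => iSup_le fun hj =>
      iSup_le fun hd' => ?_
    rw [← hd']
    exact deltaIter_le _ j n hj.le ((le_idealOrd_iff _ _ (hKpos n hn)).mp (hA n (hKpos n hn)))
  · intro hBs i hi
    rw [le_idealOrd_iff _ _ hi]
    have hK : ∀ n ∈ K, A n ≤ IsLocalRing.maximalIdeal R ^ n := by
      intro n hn
      have hn0 := hKpos n hn
      have h1 : A n ≤ B n := by
        rw [hB, reesGen]
        rw [if_neg hn0.ne']
        refine le_iSup_of_le ({n} : Multiset ℕ) ?_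
        refine le_iSup_of_le (by simp) ?_
        refine le_iSup_of_le (by simpa using hn0.ne) ?_
        simp only [Multiset.map_singleton, Multiset.prod_singleton]
        refine le_iSup_of_le n ?_
        refine le_iSup_of_le hn ?_
        refine le_iSup_of_le 0 ?_
        refine le_iSup_of_le hn0 ?_
        refine le_iSup_of_le (by simp) ?_
        exact le_of_eq rfl
      exact h1.trans ((le_idealOrd_iff _ _ hn0).mp (hBs n hn0))
    rw [hgen i hi]
    refine iSup_le fun s => iSup_le fun hs => iSup_le fun hsum => ?_
    rw [← hsum]
    exact multiset_prod_le _ _ _ fun j hj => hK j (hs j hj)
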